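/- Continuity estimate for the Orlicz operator: let φ satisfy condition (C3). Then there exists a constant C > 0, depending only on the characteristics of φ, such that for all a, b ∈ ℝ^d: |A(a) − A(b)| ≤ C · φ_{|a|}'(|a − b|), where φ_α'(s) = φ'(α + s)·s/(α + s). -/

import Mathlib

open RealInnerProductSpace

/-- The shifted Orlicz function `φ_α(t) = ∫₀^t φ'(α+s) s/(α+s) ds`, expressed in
terms of the derivative `φ'` of `φ`. -/
noncomputable def phiShift (φ' : ℝ → ℝ) (α t : ℝ) : ℝ :=
  ∫ s in (0:ℝ)..t, φ' (α + s) * s / (α + s)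

open Classical in
/-- The Orlicz operator `A(a) = (φ'(|a|)/|a|) a` (with `A(0) = 0`). -/
noncomputable def opA (φ' : ℝ → ℝ) {d : ℕ} (a : EuclideanSpace ℝ (Fin d)) :
    EuclideanSpace ℝ (Fin d) :=
  if a = 0 then 0 else (φ' ‖a‖ / ‖a‖) • a

/-- The convex conjugate `φ*(r) = sup_{s ≥ 0} (rs − φ(s))`. -/
noncomputable def orliczConj (φ : ℝ → ℝ) (r : ℝ) : ℝ :=
  sSup ((fun s => r * s - φ s) '' Set.Ici 0)

lemma aux_hasFDerivAt_norm {E : Type*} [NormedAddCommGroup E] [InnerProductSpace ℝ E]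
    {x : E} (hx : x ≠ 0) :
    HasFDerivAt (fun y : E => ‖y‖) (‖x‖⁻¹ • innerSL ℝ x) x := by
  have h0 : (0:ℝ) < ‖x‖ := norm_pos_iff.mpr hx
  have h1 : HasFDerivAt (fun y : E => ‖y‖ ^ 2) (2 • (innerSL ℝ x)) x :=
    (hasStrictFDerivAt_norm_sq x).hasFDerivAt
  have h2 := h1.sqrt (by positivity)
  have h3 : (fun y : E => Real.sqrt (‖y‖ ^ 2)) = fun y : E => ‖y‖ := by
    funext y; exact Real.sqrt_sq (norm_nonneg y)
  rw [h3] at h2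
  convert h2 using 1
  ext y
  rw [Real.sqrt_sq h0.le]
  simp only [ContinuousLinearMap.smul_apply, smul_eq_mul, two_smul,
    ContinuousLinearMap.add_apply]
  field_simp
  ring


noncomputable def auxD (φ' φ'' : ℝ → ℝ) {E : Type*} [NormedAddCommGroup E]
    [InnerProductSpace ℝ E] (x : E) : E →L[ℝ] E :=
  (φ' ‖x‖ / ‖x‖) • ContinuousLinearMap.id ℝ E +
    (((φ'' ‖x‖ * ‖x‖ - φ' ‖x‖ * 1) / ‖x‖ ^ 2) • (‖x‖⁻¹ • innerSL ℝ x)).smulRight x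

lemma auxD_hasFDerivAt {φ' φ'' : ℝ → ℝ} {E : Type*} [NormedAddCommGroup E]
    [InnerProductSpace ℝ E] {x : E} (hx : x ≠ 0)
    (hd : HasDerivAt φ' (φ'' ‖x‖) ‖x‖) :
    HasFDerivAt (fun y : E => (φ' ‖y‖ / ‖y‖) • y) (auxD φ' φ'' x) x := by
  have hxpos : (0:ℝ) < ‖x‖ := norm_pos_iff.mpr hx
  have hψ : HasDerivAt (fun t => φ' t / t) ((φ'' ‖x‖ * ‖x‖ - φ' ‖x‖ * 1) / ‖x‖ ^ 2) ‖x‖ := by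
    exact hd.div (hasDerivAt_id ‖x‖) hxpos.ne'
  have hn := aux_hasFDerivAt_norm hx
  have hg : HasFDerivAt (fun y : E => φ' ‖y‖ / ‖y‖)
      (((φ'' ‖x‖ * ‖x‖ - φ' ‖x‖ * 1) / ‖x‖ ^ 2) • (‖x‖⁻¹ • innerSL ℝ x)) x :=
    hψ.comp_hasFDerivAt x hn
  have h := hg.smul (hasFDerivAt_id x)
  convert h using 1
  all_goals rfl

lemma auxD_norm_le {φ' φ'' : ℝ → ℝ} {E : Type*} [NormedAddCommGroup E]
    [InnerProductSpace ℝ E] {x : E} (hx : x ≠ 0) {K : ℝ}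
    (h1 : 0 ≤ φ' ‖x‖) (hK : 0 ≤ K)
    (h2 : |φ'' ‖x‖ * ‖x‖ - φ' ‖x‖ * 1| ≤ K * φ' ‖x‖) :
    ‖auxD φ' φ'' x‖ ≤ (K + 1) * (φ' ‖x‖ / ‖x‖) := by
  have hxpos : (0:ℝ) < ‖x‖ := norm_pos_iff.mpr hx
  have hnn : 0 ≤ (K + 1) * (φ' ‖x‖ / ‖x‖) := by positivity
  refine ContinuousLinearMap.opNorm_le_bound _ hnn fun y => ?_
  have happ : auxD φ' φ'' x y = (φ' ‖x‖ / ‖x‖) • y +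
      ((φ'' ‖x‖ * ‖x‖ - φ' ‖x‖ * 1) / ‖x‖ ^ 2 * (‖x‖⁻¹ * ⟪x, y⟫)) • x := by
    simp [auxD, ContinuousLinearMap.smulRight_apply, mul_assoc]
  rw [happ]
  have hip : |(⟪x, y⟫ : ℝ)| ≤ ‖x‖ * ‖y‖ := abs_real_inner_le_norm x y
  have e2 : |(φ'' ‖x‖ * ‖x‖ - φ' ‖x‖ * 1) / ‖x‖ ^ 2| * ‖x‖ ≤ K * (φ' ‖x‖ / ‖x‖) := by
    rw [abs_div, abs_of_pos (pow_pos hxpos 2), div_mul_eq_mul_div]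
    rw [div_le_iff₀ (pow_pos hxpos 2)]
    have heq : K * (φ' ‖x‖ / ‖x‖) * ‖x‖ ^ 2 = K * φ' ‖x‖ * ‖x‖ := by
      field_simp
    rw [heq]
    have := mul_le_mul_of_nonneg_right h2 hxpos.le
    nlinarith [abs_nonneg (φ'' ‖x‖ * ‖x‖ - φ' ‖x‖ * 1)]
  have e1 : ‖x‖⁻¹ * |(⟪x, y⟫ : ℝ)| ≤ ‖y‖ := by
    rw [inv_mul_le_iff₀ hxpos]
    nlinarith
  calc ‖(φ' ‖x‖ / ‖x‖) • y + ((φ'' ‖x‖ * ‖x‖ - φ' ‖x‖ * 1) / ‖x‖ ^ 2 * (‖x‖⁻¹ * ⟪x, y⟫)) • x‖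
      ≤ ‖(φ' ‖x‖ / ‖x‖) • y‖ +
        ‖((φ'' ‖x‖ * ‖x‖ - φ' ‖x‖ * 1) / ‖x‖ ^ 2 * (‖x‖⁻¹ * ⟪x, y⟫)) • x‖ := norm_add_le _ _
    _ ≤ (φ' ‖x‖ / ‖x‖) * ‖y‖ + (K * (φ' ‖x‖ / ‖x‖)) * ‖y‖ := by
        rw [norm_smul, norm_smul, Real.norm_eq_abs, Real.norm_eq_abs,
          abs_of_nonneg (div_nonneg h1 hxpos.le), abs_mul, abs_mul, abs_inv, abs_norm]
        have hmm := mul_le_mul e2 e1 (mul_nonneg (inv_nonneg.mpr hxpos.le)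
          (abs_nonneg _)) (by positivity)
        gcongr ?_ + ?_
        · exact le_refl _
        · calc |(φ'' ‖x‖ * ‖x‖ - φ' ‖x‖ * 1) / ‖x‖ ^ 2| * (‖x‖⁻¹ * |(⟪x, y⟫ : ℝ)|) * ‖x‖
              = |(φ'' ‖x‖ * ‖x‖ - φ' ‖x‖ * 1) / ‖x‖ ^ 2| * ‖x‖ * (‖x‖⁻¹ * |(⟪x, y⟫ : ℝ)|) := by
                ring
            _ ≤ K * (φ' ‖x‖ / ‖x‖) * ‖y‖ := hmm
    _ = (K + 1) * (φ' ‖x‖ / ‖x‖) * ‖y‖ := by ring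

set_option maxHeartbeats 1600000 in
/-- Continuity estimate for the Orlicz operator (Lemma 4.4 (i), second relation):
under condition (C3) there exists `C > 0` depending only on the characteristics
of `φ` such that `|A(a) − A(b)| ≤ C φ_{|a|}'(|a − b|)` for all `a, b ∈ ℝ^d`,
where `φ_α'(s) = φ'(α + s) s/(α + s)`. -/
theorem stmt13 (d : ℕ) (hd : 1 ≤ d) (φ φ' φ'' : ℝ → ℝ) (c₀ C₀ : ℝ)
    (hc₀ : 0 < c₀) (hC₀ : 0 < C₀)
    (hcont : ContinuousOn φ (Set.Ici 0))
    (hd1 : ∀ s ∈ Set.Ioi (0:ℝ), HasDerivAt φ (φ' s) s)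
    (hd2 : ∀ s ∈ Set.Ioi (0:ℝ), HasDerivAt φ' (φ'' s) s)
    (hd2c : ContinuousOn φ'' (Set.Ioi 0))
    (hconv : ConvexOn ℝ (Set.Ioi 0) φ)
    (hpos : ∀ s ∈ Set.Ioi (0:ℝ), 0 < φ s)
    (hφ0 : φ 0 = 0)
    (hlim0 : Filter.Tendsto (fun s => φ s / s) (nhdsWithin 0 (Set.Ioi 0)) (nhds 0))
    (hliminfty : Filter.Tendsto (fun s => φ s / s) Filter.atTop Filter.atTop)
    (hΔ2 : ∀ s ≥ (0:ℝ), φ (2 * s) ≤ C₀ * φ s)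
    (hΔ2conj : ∀ r ≥ (0:ℝ), orliczConj φ (2 * r) ≤ C₀ * orliczConj φ r)
    (hφ'' : ∀ s ∈ Set.Ioi (0:ℝ), c₀ * φ' s ≤ φ'' s * s ∧ φ'' s * s ≤ C₀ * φ' s) :
    ∃ C : ℝ, 0 < C ∧ ∀ a b : EuclideanSpace ℝ (Fin d),
      ‖opA φ' a - opA φ' b‖ ≤ C * (φ' (‖a‖ + ‖a - b‖) * ‖a - b‖ / (‖a‖ + ‖a - b‖)) := by
  
  -- slope inequalities from convexity
  have hsl₁ : ∀ u v : ℝ, 0 < u → u < v → φ' u * (v - u) ≤ φ v - φ u := by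
    intro u v hu huv
    have h := hconv.le_slope_of_hasDerivAt (Set.mem_Ioi.mpr hu)
      (Set.mem_Ioi.mpr (hu.trans huv)) huv (hd1 u hu)
    rw [slope_def_field] at h
    have hvu : (0:ℝ) < v - u := by linarith
    calc φ' u * (v - u) ≤ (φ v - φ u) / (v - u) * (v - u) :=
          mul_le_mul_of_nonneg_right h hvu.le
      _ = φ v - φ u := by field_simp
  have hsl₂ : ∀ u v : ℝ, 0 < u → u < v → φ v - φ u ≤ φ' v * (v - u) := by
    intro u v hu huv
    have h := hconv.slope_le_of_hasDerivAt (Set.mem_Ioi.mpr hu)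
      (Set.mem_Ioi.mpr (hu.trans huv)) huv (hd1 v (hu.trans huv))
    rw [slope_def_field] at h
    have hvu : (0:ℝ) < v - u := by linarith
    calc φ v - φ u = (φ v - φ u) / (v - u) * (v - u) := by field_simp
      _ ≤ φ' v * (v - u) := mul_le_mul_of_nonneg_right h hvu.le
  -- monotonicity of φ'
  have hmono : ∀ u v : ℝ, 0 < u → u ≤ v → φ' u ≤ φ' v := by
    intro u v hu huv
    rcases eq_or_lt_of_le huv with rfl | h
    · exact le_refl _
    · have h1 := hsl₁ u v hu h
      have h2 := hsl₂ u v hu h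
      have hvu : (0:ℝ) < v - u := by linarith
      nlinarith
  -- φ s ≤ φ' s * s for s > 0
  have hφle : ∀ s : ℝ, 0 < s → φ s ≤ φ' s * s := by
    intro s hs
    have hc0 : Filter.Tendsto φ (nhdsWithin 0 (Set.Ioi 0)) (nhds 0) := by
      have := (hcont 0 (Set.mem_Ici.mpr le_rfl)).mono (Set.Ioi_subset_Ici_self : Set.Ioi (0:ℝ) ⊆ Set.Ici 0)
      rw [ContinuousWithinAt, hφ0] at this
      exact this
    have hev : ∀ᶠ ε in nhdsWithin (0:ℝ) (Set.Ioi 0), φ s - φ ε ≤ φ' s * (s - ε) := by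
      filter_upwards [self_mem_nhdsWithin,
        eventually_nhdsWithin_of_eventually_nhds (eventually_lt_nhds hs)] with ε hε1 hε2
      exact hsl₂ ε s hε1 hε2
    have h1 : Filter.Tendsto (fun ε => φ s - φ ε) (nhdsWithin 0 (Set.Ioi 0)) (nhds (φ s)) := by
      simpa using (tendsto_const_nhds.sub hc0)
    have h2 : Filter.Tendsto (fun ε => φ' s * (s - ε)) (nhdsWithin 0 (Set.Ioi 0))
        (nhds (φ' s * s)) := by
      have : Filter.Tendsto (fun ε : ℝ => φ' s * (s - ε)) (nhds 0) (nhds (φ' s * (s - 0))) := by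
        exact (tendsto_const_nhds.sub Filter.tendsto_id).const_mul _
      simpa using this.mono_left nhdsWithin_le_nhds
    have := le_of_tendsto_of_tendsto h1 h2 hev
    simpa using this
  -- positivity of φ'
  have hφ'pos : ∀ s : ℝ, 0 < s → 0 < φ' s := by
    intro s hs
    have h1 := hφle s hs
    have h2 := hpos s (Set.mem_Ioi.mpr hs)
    nlinarith
  have hφnn : ∀ s : ℝ, 0 ≤ s → 0 ≤ φ s := by
    intro s hs
    rcases eq_or_lt_of_le hs with rfl | h
    · simp [hφ0]
    · exact (hpos s (Set.mem_Ioi.mpr h)).le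
  -- C₀ ≥ 1
  have hC₀1 : 1 ≤ C₀ := by
    have h1 := hΔ2 1 (by norm_num)
    have h2 := hsl₁ 1 2 one_pos one_lt_two
    have h3 := hpos 1 (Set.mem_Ioi.mpr one_pos)
    have h4 := (hφ'pos 1 one_pos).le
    norm_num at h1
    nlinarith
  -- doubling for φ'
  have hdbl : ∀ t : ℝ, 0 < t → φ' (2 * t) ≤ C₀ ^ 2 / 2 * φ' t := by
    intro t ht
    have h1 := hsl₁ (2 * t) (4 * t) (by linarith) (by linarith)
    have h2 := hΔ2 (2 * t) (by linarith)
    have h3 := hΔ2 t ht.le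
    have h4 := hφle t ht
    have h5 := hφnn (2 * t) (by linarith)
    have h6 : φ (4 * t) = φ (2 * (2 * t)) := by ring_nf
    nlinarith [hφ'pos t ht, hφ'pos (2*t) (by linarith : (0:ℝ) < 2*t)]
  
  -- the constant
  refine ⟨6 + 3 * (C₀ + 2) * C₀ ^ 2, by nlinarith, ?_⟩
  intro a b
  by_cases hab : a = b
  · subst hab; simp
  have hrpos : 0 < ‖a - b‖ := norm_pos_iff.mpr (sub_ne_zero.mpr hab)
  have hnann : (0:ℝ) ≤ ‖a‖ := norm_nonneg a
  have hsum : 0 < ‖a‖ + ‖a - b‖ := by linarith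
  have hP : 0 < φ' (‖a‖ + ‖a - b‖) := hφ'pos _ hsum
  have hC6 : (6:ℝ) ≤ 6 + 3 * (C₀ + 2) * C₀ ^ 2 := by nlinarith
  by_cases hcase : ‖a‖ ≤ 2 * ‖a - b‖
  · -- far case: use the trivial bound
    have hA : ∀ c : EuclideanSpace ℝ (Fin d), ‖c‖ ≤ ‖a‖ + ‖a - b‖ →
        ‖opA φ' c‖ ≤ φ' (‖a‖ + ‖a - b‖) := by
      intro c hc
      by_cases h0 : c = 0
      · simp [opA, h0]
        exact hP.le
      · have hcpos : 0 < ‖c‖ := norm_pos_iff.mpr h0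
        rw [opA, if_neg h0, norm_smul, Real.norm_eq_abs,
          abs_of_nonneg (div_nonneg (hφ'pos _ hcpos).le hcpos.le),
          div_mul_cancel₀ _ hcpos.ne']
        exact hmono _ _ hcpos hc
    have hb : ‖b‖ ≤ ‖a‖ + ‖a - b‖ := by
      have h := norm_sub_norm_le b a
      rw [norm_sub_rev] at h
      linarith
    have h1 : ‖opA φ' a - opA φ' b‖ ≤ 2 * φ' (‖a‖ + ‖a - b‖) := by
      calc ‖opA φ' a - opA φ' b‖ ≤ ‖opA φ' a‖ + ‖opA φ' b‖ := norm_sub_le _ _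
        _ ≤ _ := by
            have := hA a (by linarith)
            have := hA b hb
            linarith
    have hkey : φ' (‖a‖ + ‖a - b‖) / 3 ≤ φ' (‖a‖ + ‖a - b‖) * ‖a - b‖ / (‖a‖ + ‖a - b‖) := by
      rw [div_le_div_iff₀ (by norm_num) hsum]
      nlinarith
    nlinarith [mul_le_mul_of_nonneg_left hkey (by nlinarith : (0:ℝ) ≤ 6 + 3 * (C₀ + 2) * C₀ ^ 2),
      mul_nonneg (mul_nonneg hP.le hrpos.le) (le_of_lt (inv_pos.mpr hsum)),
      div_nonneg (mul_nonneg hP.le hrpos.le) hsum.le]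
  · -- near case: mean value inequality on the closed ball
    push_neg at hcase
    have hnapos : 0 < ‖a‖ := by linarith
    have ha0 : a ≠ 0 := norm_pos_iff.mp hnapos
    have hxnorm : ∀ x ∈ Metric.closedBall a ‖a - b‖,
        ‖a‖ - ‖a - b‖ ≤ ‖x‖ ∧ ‖x‖ ≤ ‖a‖ + ‖a - b‖ := by
      intro x hx
      rw [Metric.mem_closedBall, dist_eq_norm] at hx
      constructor
      · have h := norm_sub_norm_le a x
        rw [norm_sub_rev] at h
        linarith
      · have h := norm_sub_norm_le x a
        linarith
    have hbmem : b ∈ Metric.closedBall a ‖a - b‖ := by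
      rw [Metric.mem_closedBall, dist_eq_norm, norm_sub_rev]
    have hamem : a ∈ Metric.closedBall a ‖a - b‖ := Metric.mem_closedBall_self hrpos.le
    have hder : ∀ x ∈ Metric.closedBall a ‖a - b‖,
        HasFDerivAt (fun y : EuclideanSpace ℝ (Fin d) => (φ' ‖y‖ / ‖y‖) • y)
          (auxD φ' φ'' x) x := by
      intro x hx
      obtain ⟨hx1, hx2⟩ := hxnorm x hx
      have hxpos : 0 < ‖x‖ := by linarith
      exact auxD_hasFDerivAt (norm_pos_iff.mp hxpos) (hd2 _ hxpos)
    have hbound : ∀ x ∈ Metric.closedBall a ‖a - b‖,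
        ‖auxD φ' φ'' x‖ ≤ (C₀ + 2) * (C₀ ^ 2 * (φ' ‖a‖ / ‖a‖)) := by
      intro x hx
      obtain ⟨hx1, hx2⟩ := hxnorm x hx
      have hxpos : 0 < ‖x‖ := by linarith
      have hφ'x := hφ'pos _ hxpos
      have hφ'a := hφ'pos _ hnapos
      obtain ⟨hl, hr⟩ := hφ'' ‖x‖ hxpos
      have h2 : |φ'' ‖x‖ * ‖x‖ - φ' ‖x‖ * 1| ≤ (C₀ + 1) * φ' ‖x‖ := by
        rw [abs_le]; constructor <;> nlinarith
      have h3 := auxD_norm_le (norm_pos_iff.mp hxpos) hφ'x.le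
        (by linarith : (0:ℝ) ≤ C₀ + 1) h2
      refine h3.trans ?_
      have hfrac : φ' ‖x‖ / ‖x‖ ≤ C₀ ^ 2 * (φ' ‖a‖ / ‖a‖) := by
        rw [mul_div_assoc', div_le_div_iff₀ hxpos hnapos]
        have h2na := hdbl ‖a‖ hnapos
        have hmx : φ' ‖x‖ ≤ φ' (2 * ‖a‖) := hmono _ _ hxpos (by linarith)
        have t1 : φ' ‖x‖ * ‖a‖ ≤ (C₀ ^ 2 / 2 * φ' ‖a‖) * ‖a‖ :=
          mul_le_mul_of_nonneg_right (hmx.trans h2na) hnann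
        have t2 : (C₀ ^ 2 * φ' ‖a‖) * (‖a‖ / 2) ≤ (C₀ ^ 2 * φ' ‖a‖) * ‖x‖ :=
          mul_le_mul_of_nonneg_left (by linarith) (by positivity)
        nlinarith
      have hnnf : (0:ℝ) ≤ C₀ + 2 := by linarith
      calc (C₀ + 1 + 1) * (φ' ‖x‖ / ‖x‖) = (C₀ + 2) * (φ' ‖x‖ / ‖x‖) := by ring
        _ ≤ (C₀ + 2) * (C₀ ^ 2 * (φ' ‖a‖ / ‖a‖)) := mul_le_mul_of_nonneg_left hfrac hnnf
    have hmvt := (convex_closedBall a ‖a - b‖).norm_image_sub_le_of_norm_hasFDerivWithin_le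
      (fun x hx => (hder x hx).hasFDerivWithinAt) hbound hbmem hamem
    have hb0 : b ≠ 0 := by
      intro h
      rw [h, sub_zero] at hrpos hcase
      linarith
    have hopA : opA φ' a - opA φ' b =
        (fun y : EuclideanSpace ℝ (Fin d) => (φ' ‖y‖ / ‖y‖) • y) a -
        (fun y : EuclideanSpace ℝ (Fin d) => (φ' ‖y‖ / ‖y‖) • y) b := by
      rw [opA, opA, if_neg ha0, if_neg hb0]
    rw [hopA]
    have hQ : (φ' ‖a‖ / ‖a‖) * (‖a‖ + ‖a - b‖) ≤ 3 / 2 * φ' (‖a‖ + ‖a - b‖) := by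
      rw [div_mul_eq_mul_div, div_le_iff₀ hnapos]
      have hm := hmono ‖a‖ (‖a‖ + ‖a - b‖) hnapos (by linarith)
      nlinarith [(hφ'pos _ hnapos).le]
    have hfin : (C₀ + 2) * (C₀ ^ 2 * (φ' ‖a‖ / ‖a‖)) * ‖a - b‖ * (‖a‖ + ‖a - b‖) ≤
        (6 + 3 * (C₀ + 2) * C₀ ^ 2) * (φ' (‖a‖ + ‖a - b‖) * ‖a - b‖) := by
      have hc2 : (0:ℝ) ≤ (C₀ + 2) * C₀ ^ 2 * ‖a - b‖ := by positivity
      have hstep := mul_le_mul_of_nonneg_left hQ hc2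
      nlinarith [hP.le, hrpos.le, mul_nonneg hP.le hrpos.le]
    rw [mul_div_assoc']
    rw [le_div_iff₀ hsum]
    calc ‖(fun y : EuclideanSpace ℝ (Fin d) => (φ' ‖y‖ / ‖y‖) • y) a -
          (fun y : EuclideanSpace ℝ (Fin d) => (φ' ‖y‖ / ‖y‖) • y) b‖ * (‖a‖ + ‖a - b‖)
        ≤ (C₀ + 2) * (C₀ ^ 2 * (φ' ‖a‖ / ‖a‖)) * ‖a - b‖ * (‖a‖ + ‖a - b‖) := by
          have hh : ‖(fun y : EuclideanSpace ℝ (Fin d) => (φ' ‖y‖ / ‖y‖) • y) a -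
              (fun y : EuclideanSpace ℝ (Fin d) => (φ' ‖y‖ / ‖y‖) • y) b‖ ≤
              (C₀ + 2) * (C₀ ^ 2 * (φ' ‖a‖ / ‖a‖)) * ‖a - b‖ := by
            simpa [norm_sub_rev] using hmvt
          exact mul_le_mul_of_nonneg_right hh hsum.le
      _ ≤ (6 + 3 * (C₀ + 2) * C₀ ^ 2) * (φ' (‖a‖ + ‖a - b‖) * ‖a - b‖) := hfin
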